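/- Let $(X_i(t))_{i=1}^n$ be independent copies of a Markov chain with transition function $p_t$, started at $x_1,\dots,x_n$, and let $\mu$ be a probability measure on $\{0,1\}^{\mathcal{S}}$. Suppose that for every $x$, the random variables $Z_t^x(\eta) = \sum_y p_t(x,y)\eta(y)$ converge in probability (under $\mu$) to the constant $\alpha(x) \in [0,1]$. Then $\lim_{t\to\infty} E^{(x_1,\dots,x_n)} \hat\mu(\{X_1(t),\dots,X_n(t)\}) = \prod_{i=1}^n \alpha(x_i)$, where $\hat\mu(A) = \mu\{\eta : \eta \equiv 1 \text{ on } A\}$. -/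

import Mathlib

open MeasureTheory Filter

private lemma abs_prod_sub_prod_le {ι : Type*} (s : Finset ι) (f g : ι → ℝ)
    (hf : ∀ i, f i ∈ Set.Icc (0:ℝ) 1) (hg : ∀ i, g i ∈ Set.Icc (0:ℝ) 1) :
    |∏ i ∈ s, f i - ∏ i ∈ s, g i| ≤ ∑ i ∈ s, |f i - g i| := by
  induction s using Finset.cons_induction with
  | empty => simp
  | cons a s ha ih =>
    rw [Finset.prod_cons, Finset.prod_cons, Finset.sum_cons]
    have hP : |∏ i ∈ s, f i| ≤ 1 := by
      rw [abs_of_nonneg (Finset.prod_nonneg fun i _ => (hf i).1)]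
      exact Finset.prod_le_one (fun i _ => (hf i).1) (fun i _ => (hf i).2)
    have hQ : |∏ i ∈ s, g i| ≤ 1 := by
      rw [abs_of_nonneg (Finset.prod_nonneg fun i _ => (hg i).1)]
      exact Finset.prod_le_one (fun i _ => (hg i).1) (fun i _ => (hg i).2)
    have hfa : |f a| ≤ 1 := abs_le.2 ⟨by linarith [(hf a).1], (hf a).2⟩
    calc |f a * ∏ i ∈ s, f i - g a * ∏ i ∈ s, g i|
        = |f a * (∏ i ∈ s, f i - ∏ i ∈ s, g i) + (f a - g a) * ∏ i ∈ s, g i| := by ring_nf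
      _ ≤ |f a * (∏ i ∈ s, f i - ∏ i ∈ s, g i)| + |(f a - g a) * ∏ i ∈ s, g i| := abs_add_le _ _
      _ = |f a| * |∏ i ∈ s, f i - ∏ i ∈ s, g i| + |f a - g a| * |∏ i ∈ s, g i| := by
          rw [abs_mul, abs_mul]
      _ ≤ 1 * |∏ i ∈ s, f i - ∏ i ∈ s, g i| + |f a - g a| * 1 := by
          have h1 := abs_nonneg (∏ i ∈ s, f i - ∏ i ∈ s, g i)
          have h2 := abs_nonneg (f a - g a)
          have h3 := abs_nonneg (f a)
          nlinarith [hfa, hQ]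
      _ = |f a - g a| + |∏ i ∈ s, f i - ∏ i ∈ s, g i| := by ring
      _ ≤ |f a - g a| + ∑ i ∈ s, |f i - g i| := by linarith [ih]

/-- If for every `x` the averages `Z_t^x(η) = ∑_y p_t(x,y) η(y)` converge in probability
(under `μ`) to the constant `α(x)`, then the dual expectations factorize:
`E^{(x₁,…,xₙ)} μ̂({X₁(t),…,Xₙ(t)}) = ∫ ∏ᵢ Z_t^{xᵢ} dμ → ∏ᵢ α(xᵢ)`. -/
theorem product_convergence
    {S : Type*} [Countable S] [MeasurableSpace S]
    (μ : Measure (S → Bool)) [IsProbabilityMeasure μ]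
    (p : ℝ → S → S → ℝ)
    (hpnonneg : ∀ t x y, 0 ≤ p t x y)
    (hpprob : ∀ t x, ∑' y, p t x y = 1)
    (α : S → ℝ) (hα : ∀ x, α x ∈ Set.Icc (0 : ℝ) 1)
    -- Z t x η = ∑_y p_t(x,y) η(y)
    (Z : ℝ → S → (S → Bool) → ℝ)
    (hZ : ∀ t x η, Z t x η = ∑' y, p t x y * (if η y then (1 : ℝ) else 0))
    -- convergence in probability of Z t x to α x under μ
    (hprob : ∀ x, ∀ ε : ℝ, 0 < ε →
      Filter.Tendsto (fun t => μ {η | ε ≤ |Z t x η - α x|}) Filter.atTop (nhds 0))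
    (n : ℕ) (x : Fin n → S) :
    Filter.Tendsto (fun t => ∫ η, ∏ i : Fin n, Z t (x i) η ∂μ)
      Filter.atTop (nhds (∏ i : Fin n, α (x i))) := by
  -- summability of the transition probabilities
  have hsummp : ∀ t x', Summable (p t x') := by
    intro t x'
    by_contra h
    simpa [tsum_eq_zero_of_not_summable h] using hpprob t x'
  have htermnn : ∀ t x' (η : S → Bool) y, 0 ≤ p t x' y * (if η y then (1:ℝ) else 0) := by
    intro t x' η y
    exact mul_nonneg (hpnonneg t x' y) (by split <;> norm_num)
  have htermle : ∀ t x' (η : S → Bool) y, p t x' y * (if η y then (1:ℝ) else 0) ≤ p t x' y := by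
    intro t x' η y
    have : (if η y then (1:ℝ) else 0) ≤ 1 := by split <;> norm_num
    calc p t x' y * (if η y then (1:ℝ) else 0) ≤ p t x' y * 1 :=
      mul_le_mul_of_nonneg_left this (hpnonneg t x' y)
    _ = p t x' y := mul_one _
  have hsummterm : ∀ t x' (η : S → Bool),
      Summable (fun y => p t x' y * (if η y then (1:ℝ) else 0)) := by
    intro t x' η
    exact Summable.of_nonneg_of_le (htermnn t x' η) (htermle t x' η) (hsummp t x')
  -- Z takes values in [0,1]
  have hZ01 : ∀ t x' η, Z t x' η ∈ Set.Icc (0:ℝ) 1 := by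
    intro t x' η
    rw [hZ]
    constructor
    · exact tsum_nonneg (htermnn t x' η)
    · calc (∑' y, p t x' y * (if η y then (1:ℝ) else 0)) ≤ ∑' y, p t x' y :=
        Summable.tsum_le_tsum (htermle t x' η) (hsummterm t x' η) (hsummp t x')
      _ = 1 := hpprob t x'
  -- measurability of Z t x'
  have hmble : ∀ t x', Measurable (Z t x') := by
    intro t x'
    have : Z t x' = fun η =>
        (∑' y, ENNReal.ofReal (p t x' y * (if η y then (1:ℝ) else 0))).toReal := by
      funext η
      rw [hZ, ← ENNReal.ofReal_tsum_of_nonneg (htermnn t x' η) (hsummterm t x' η),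
        ENNReal.toReal_ofReal (tsum_nonneg (htermnn t x' η))]
    rw [this]
    apply Measurable.ennreal_toReal
    apply Measurable.ennreal_tsum
    intro y
    apply Measurable.comp (f := fun η : S → Bool => η y)
      (g := fun b : Bool => ENNReal.ofReal (p t x' y * (if b then (1:ℝ) else 0)))
    · exact measurable_from_top
    · exact measurable_pi_apply y
  -- integrability
  have hintZ : ∀ t x', Integrable (Z t x') μ := by
    intro t x'
    refine Integrable.mono' (integrable_const 1) (hmble t x').aestronglyMeasurable ?_
    filter_upwards with η
    rw [Real.norm_eq_abs, abs_of_nonneg (hZ01 t x' η).1]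
    exact (hZ01 t x' η).2
  have hintprod : ∀ t, Integrable (fun η => ∏ i : Fin n, Z t (x i) η) μ := by
    intro t
    refine Integrable.mono' (integrable_const 1)
      (Finset.measurable_prod _ fun i _ => hmble t (x i)).aestronglyMeasurable ?_
    filter_upwards with η
    rw [Real.norm_eq_abs, abs_of_nonneg (Finset.prod_nonneg fun i _ => (hZ01 t (x i) η).1)]
    exact Finset.prod_le_one (fun i _ => (hZ01 t (x i) η).1) (fun i _ => (hZ01 t (x i) η).2)
  have hintabs : ∀ t x', Integrable (fun η => |Z t x' η - α x'|) μ :=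
    fun t x' => ((hintZ t x').sub (integrable_const _)).abs
  -- L¹ convergence of each factor
  have hL1 : ∀ x', Tendsto (fun t => ∫ η, |Z t x' η - α x'| ∂μ) atTop (nhds 0) := by
    intro x'
    rw [NormedAddCommGroup.tendsto_nhds_zero]
    intro ε hε
    have hδ : (0:ℝ) < ε / 4 := by linarith
    have hto : Tendsto (fun t => (μ {η | ε / 4 ≤ |Z t x' η - α x'|}).toReal)
        atTop (nhds 0) := by
      have := (ENNReal.tendsto_toReal (a := 0) (by simp)).comp (hprob x' (ε/4) hδ)
      exact this
    filter_upwards [hto.eventually (gt_mem_nhds hδ)] with t ht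
    set A := {η | ε / 4 ≤ |Z t x' η - α x'|} with hA
    have hAmeas : MeasurableSet A :=
      measurableSet_le measurable_const ((hmble t x').sub measurable_const).abs
    have hbd : ∀ η, |Z t x' η - α x'| ≤ ε / 4 + A.indicator (fun _ => (2:ℝ)) η := by
      intro η
      by_cases hη : η ∈ A
      · rw [Set.indicator_of_mem hη]
        have h1 : |Z t x' η| ≤ 1 := by
          rw [abs_of_nonneg (hZ01 t x' η).1]; exact (hZ01 t x' η).2
        have h2 : |α x'| ≤ 1 := by
          rw [abs_of_nonneg (hα x').1]; exact (hα x').2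
        calc |Z t x' η - α x'| ≤ |Z t x' η| + |α x'| := abs_sub _ _
          _ ≤ 2 := by linarith
          _ ≤ ε / 4 + 2 := by linarith
      · rw [Set.indicator_of_notMem hη]
        simp only [hA, Set.mem_setOf_eq, not_le] at hη
        linarith
    have hint2 : Integrable (fun η => ε / 4 + A.indicator (fun _ => (2:ℝ)) η) μ :=
      (integrable_const _).add ((integrable_const (2:ℝ)).indicator hAmeas)
    have hle : ∫ η, |Z t x' η - α x'| ∂μ ≤ ε / 4 + 2 * (μ A).toReal := by
      calc ∫ η, |Z t x' η - α x'| ∂μ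
          ≤ ∫ η, (ε / 4 + A.indicator (fun _ => (2:ℝ)) η) ∂μ :=
            integral_mono (hintabs t x') hint2 hbd
        _ = ε / 4 + (μ A).toReal * 2 := by
            rw [integral_add (integrable_const _) ((integrable_const (2:ℝ)).indicator hAmeas),
              integral_const, integral_indicator_const _ hAmeas]
            simp
            rfl
        _ = ε / 4 + 2 * (μ A).toReal := by ring
    have hnn : 0 ≤ ∫ η, |Z t x' η - α x'| ∂μ :=
      integral_nonneg fun η => abs_nonneg _
    rw [Real.norm_eq_abs, abs_of_nonneg hnn]
    have : (μ A).toReal < ε / 4 := ht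
    linarith
  -- main squeeze
  rw [tendsto_iff_dist_tendsto_zero]
  have hub : ∀ t, dist (∫ η, ∏ i : Fin n, Z t (x i) η ∂μ) (∏ i : Fin n, α (x i))
      ≤ ∑ i : Fin n, ∫ η, |Z t (x i) η - α (x i)| ∂μ := by
    intro t
    rw [Real.dist_eq]
    calc |(∫ η, ∏ i : Fin n, Z t (x i) η ∂μ) - ∏ i : Fin n, α (x i)|
        = |∫ η, (∏ i : Fin n, Z t (x i) η - ∏ i : Fin n, α (x i)) ∂μ| := by
          rw [integral_sub (hintprod t) (integrable_const _), integral_const]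
          simp
      _ ≤ ∫ η, |∏ i : Fin n, Z t (x i) η - ∏ i : Fin n, α (x i)| ∂μ := by
          simpa [Real.norm_eq_abs] using
            norm_integral_le_integral_norm (μ := μ)
              (fun η => ∏ i : Fin n, Z t (x i) η - ∏ i : Fin n, α (x i))
      _ ≤ ∫ η, (∑ i : Fin n, |Z t (x i) η - α (x i)|) ∂μ := by
          refine integral_mono ((hintprod t).sub (integrable_const _)).abs
            (integrable_finset_sum _ fun i _ => hintabs t (x i)) ?_
          intro η
          exact abs_prod_sub_prod_le Finset.univ _ _ (fun i => hZ01 t (x i) η)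
            (fun i => hα (x i))
      _ = ∑ i : Fin n, ∫ η, |Z t (x i) η - α (x i)| ∂μ :=
          integral_finset_sum _ fun i _ => hintabs t (x i)
  have hsumto : Tendsto (fun t => ∑ i : Fin n, ∫ η, |Z t (x i) η - α (x i)| ∂μ)
      atTop (nhds 0) := by
    have := tendsto_finset_sum (Finset.univ : Finset (Fin n))
      (fun i _ => hL1 (x i))
    simpa using this
  exact squeeze_zero (fun t => dist_nonneg) hub hsumto
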